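/- arXiv:2512.07397 — 4 statements merged into one kernel-verified Lean document; each statement's English description precedes it below -/
import Mathlib

section
/- Let Σ ⊆ ℝ^N be nonempty, and let P⊥ : ℝ^N → ℝ^N be a selection of the orthogonal projection onto Σ, i.e. for every z ∈ ℝ^N, P⊥(z) ∈ Σ and ‖z − P⊥(z)‖₂ ≤ ‖z − x‖₂ for all x ∈ Σ. Suppose P⊥ satisfies the restricted β-Lipschitz property with respect to Σ with constant β⊥. For α > 0 define P_α : ℝ^N → ℝ^N by P_α(z) = (1 + α‖z − P⊥(z)‖₂ / ‖P⊥(z)‖₂) · P⊥(z) if P⊥(z) ≠ 0, and P_α(z) = 0 if P⊥(z) = 0. Then, assuming Σ is closed under nonnegative scaling so that P_α(z) ∈ Σ, P_α satisfies the restricted (β⊥ + α)-Lipschitz property: for all z ∈ ℝ^N and x ∈ Σ, ‖P_α(z) − x‖₂ ≤ (β⊥ + α) ‖z − x‖₂. -/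
open Classical in
/-- Degrading the restricted Lipschitz constant of an orthogonal projection:
the perturbed projection `P_α` is restricted `(β⊥ + α)`-Lipschitz. -/
theorem perturbed_orthogonal_projection_restricted_lipschitz
    {N : ℕ} (S : Set (EuclideanSpace ℝ (Fin N))) (hne : S.Nonempty)
    (Pperp : EuclideanSpace ℝ (Fin N) → EuclideanSpace ℝ (Fin N))
    (hmem : ∀ z, Pperp z ∈ S)
    (hmin : ∀ z, ∀ x ∈ S, ‖z - Pperp z‖ ≤ ‖z - x‖)
    (βperp : ℝ)
    (hLip : ∀ z, ∀ x ∈ S, ‖Pperp z - x‖ ≤ βperp * ‖z - x‖)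
    (α : ℝ) (hα : 0 < α)
    (hscale : ∀ c : ℝ, 0 ≤ c → ∀ x ∈ S, c • x ∈ S)
    (Pα : EuclideanSpace ℝ (Fin N) → EuclideanSpace ℝ (Fin N))
    (hPα : ∀ z, Pα z =
      if Pperp z ≠ 0 then (1 + α * (‖z - Pperp z‖ / ‖Pperp z‖)) • Pperp z else 0) :
    ∀ z, ∀ x ∈ S, ‖Pα z - x‖ ≤ (βperp + α) * ‖z - x‖ := by
  intro z x hx
  have hzx : (0:ℝ) ≤ ‖z - x‖ := norm_nonneg _
  have hmin' := hmin z x hx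
  have hLip' := hLip z x hx
  rw [hPα z]
  by_cases h : Pperp z = 0
  · simp only [h, ne_eq, not_true_eq_false, if_false]
    have : ‖(0 : EuclideanSpace ℝ (Fin N)) - x‖ = ‖Pperp z - x‖ := by rw [h]
    rw [this]
    calc ‖Pperp z - x‖ ≤ βperp * ‖z - x‖ := hLip'
      _ ≤ (βperp + α) * ‖z - x‖ := by nlinarith
  · simp only [ne_eq, h, not_false_eq_true, if_true]
    have hnorm : (0:ℝ) < ‖Pperp z‖ := norm_pos_iff.mpr h
    have key : (1 + α * (‖z - Pperp z‖ / ‖Pperp z‖)) • Pperp z - x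
        = (Pperp z - x) + (α * (‖z - Pperp z‖ / ‖Pperp z‖)) • Pperp z := by
      rw [add_smul, one_smul]; abel
    rw [key]
    have h2 : ‖(α * (‖z - Pperp z‖ / ‖Pperp z‖)) • Pperp z‖ = α * ‖z - Pperp z‖ := by
      rw [norm_smul, Real.norm_eq_abs, abs_of_nonneg (by positivity)]
      field_simp
    calc ‖(Pperp z - x) + (α * (‖z - Pperp z‖ / ‖Pperp z‖)) • Pperp z‖
        ≤ ‖Pperp z - x‖ + ‖(α * (‖z - Pperp z‖ / ‖Pperp z‖)) • Pperp z‖ := norm_add_le _ _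
      _ = ‖Pperp z - x‖ + α * ‖z - Pperp z‖ := by rw [h2]
      _ ≤ βperp * ‖z - x‖ + α * ‖z - x‖ := by nlinarith
      _ = (βperp + α) * ‖z - x‖ := by ring
end

section
/- Let Σ₁ ⊆ E₁ and Σ₂ ⊆ E₂ be nonempty subsets of Euclidean spaces, equip E₁ × E₂ with the ℓ²-product norm, and set Σ = Σ₁ × Σ₂. Let Q : E₁ × E₂ → E₁ × E₂ be a generalized projection onto Σ satisfying the restricted β_Q-Lipschitz property with respect to Σ. Then for every fixed x₁ ∈ Σ₁, the map P̃₂ : E₂ → E₂ defined by P̃₂(z₂) = [Q(x₁, z₂)]₂ (the second component of Q(x₁,z₂)) is a generalized projection onto Σ₂ satisfying the restricted β_Q-Lipschitz property with respect to Σ₂: for all z₂ ∈ E₂ and x₂ ∈ Σ₂, ‖P̃₂(z₂) − x₂‖₂ ≤ β_Q ‖z₂ − x₂‖₂. -/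
/-- Slicing a restricted Lipschitz generalized projection onto a product model:
fixing the first coordinate at a point of `Σ₁`, the second component of `Q` is
a generalized projection onto `Σ₂` with the same restricted Lipschitz constant. -/
theorem sliced_projection_restricted_lipschitz
    {N₁ N₂ : ℕ}
    (S₁ : Set (EuclideanSpace ℝ (Fin N₁))) (S₂ : Set (EuclideanSpace ℝ (Fin N₂)))
    (h₁ : S₁.Nonempty) (h₂ : S₂.Nonempty)
    (Q : WithLp 2 (EuclideanSpace ℝ (Fin N₁) × EuclideanSpace ℝ (Fin N₂)) →
         WithLp 2 (EuclideanSpace ℝ (Fin N₁) × EuclideanSpace ℝ (Fin N₂)))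
    (βQ : ℝ)
    (S : Set (WithLp 2 (EuclideanSpace ℝ (Fin N₁) × EuclideanSpace ℝ (Fin N₂))))
    (hS : S = {z | ((WithLp.equiv 2 (EuclideanSpace ℝ (Fin N₁) × EuclideanSpace ℝ (Fin N₂))) z).1 ∈ S₁
      ∧ ((WithLp.equiv 2 (EuclideanSpace ℝ (Fin N₁) × EuclideanSpace ℝ (Fin N₂))) z).2 ∈ S₂})
    (hQmem : ∀ z, Q z ∈ S)
    (hQlip : ∀ z, ∀ x ∈ S, ‖Q z - x‖ ≤ βQ * ‖z - x‖)
    (x₁ : EuclideanSpace ℝ (Fin N₁)) (hx₁ : x₁ ∈ S₁)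
    (P₂ : EuclideanSpace ℝ (Fin N₂) → EuclideanSpace ℝ (Fin N₂))
    (hP₂ : ∀ z₂, P₂ z₂ =
      ((WithLp.equiv 2 (EuclideanSpace ℝ (Fin N₁) × EuclideanSpace ℝ (Fin N₂)))
        (Q ((WithLp.equiv 2 (EuclideanSpace ℝ (Fin N₁) × EuclideanSpace ℝ (Fin N₂))).symm
          (x₁, z₂)))).2) :
    (∀ z₂, P₂ z₂ ∈ S₂) ∧ (∀ z₂, ∀ x₂ ∈ S₂, ‖P₂ z₂ - x₂‖ ≤ βQ * ‖z₂ - x₂‖) := by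
  subst hS
  constructor
  · intro z₂
    rw [hP₂ z₂]
    exact (hQmem _).2
  · intro z₂ x₂ hx₂
    set z := (WithLp.equiv 2 (EuclideanSpace ℝ (Fin N₁) × EuclideanSpace ℝ (Fin N₂))).symm (x₁, z₂)
    set x := (WithLp.equiv 2 (EuclideanSpace ℝ (Fin N₁) × EuclideanSpace ℝ (Fin N₂))).symm (x₁, x₂)
    have hxS : x ∈ {z | ((WithLp.equiv 2 (EuclideanSpace ℝ (Fin N₁) × EuclideanSpace ℝ (Fin N₂))) z).1 ∈ S₁
      ∧ ((WithLp.equiv 2 (EuclideanSpace ℝ (Fin N₁) × EuclideanSpace ℝ (Fin N₂))) z).2 ∈ S₂} :=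
      ⟨hx₁, hx₂⟩
    have hle : ‖P₂ z₂ - x₂‖ ≤ ‖Q z - x‖ := by
      have h2 : ‖Q z - x‖ ^ 2 = ‖(Q z - x).fst‖ ^ 2 + ‖(Q z - x).snd‖ ^ 2 :=
        WithLp.prod_norm_sq_eq_of_L2 _
      have hsnd : (Q z - x).snd = P₂ z₂ - x₂ := by rw [hP₂ z₂]; rfl
      have : ‖P₂ z₂ - x₂‖ ^ 2 ≤ ‖Q z - x‖ ^ 2 := by
        rw [h2, hsnd]; exact le_add_of_nonneg_left (by positivity)
      exact (pow_le_pow_iff_left₀ (norm_nonneg _) (norm_nonneg _) two_ne_zero).mp this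
    have hzx : ‖z - x‖ = ‖z₂ - x₂‖ := by
      have h2 : ‖z - x‖ ^ 2 = ‖(z - x).fst‖ ^ 2 + ‖(z - x).snd‖ ^ 2 :=
        WithLp.prod_norm_sq_eq_of_L2 _
      have hfst : (z - x).fst = 0 := by simp [z, x]
      have hsnd : (z - x).snd = z₂ - x₂ := rfl
      have : ‖z - x‖ ^ 2 = ‖z₂ - x₂‖ ^ 2 := by rw [h2, hfst, hsnd]; simp
      exact le_antisymm
        ((pow_le_pow_iff_left₀ (norm_nonneg _) (norm_nonneg _) two_ne_zero).mp this.le)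
        ((pow_le_pow_iff_left₀ (norm_nonneg _) (norm_nonneg _) two_ne_zero).mp this.ge)
    calc ‖P₂ z₂ - x₂‖ ≤ ‖Q z - x‖ := hle
      _ ≤ βQ * ‖z - x‖ := hQlip z x hxS
      _ = βQ * ‖z₂ - x₂‖ := by rw [hzx]
end

section
/- Let Σ₁ ⊆ E₁ and Σ₂ ⊆ E₂ be nonempty subsets of Euclidean spaces, equip E₁ × E₂ with the ℓ²-product norm, and set Σ = Σ₁ × Σ₂. For i = 1, 2 let β_i⋆ be the infimum of the restricted Lipschitz constants β_{Σᵢ}(P) over all generalized projections P onto Σᵢ, and suppose P_i is a generalized projection onto Σᵢ achieving the optimal constant β_i⋆. Then P_Σ(z₁,z₂) = (P₁(z₁), P₂(z₂)) is an optimal generalized projection onto Σ: its restricted Lipschitz constant equals max(β₁⋆, β₂⋆), and no generalized projection Q onto Σ has restricted Lipschitz constant strictly smaller than max(β₁⋆, β₂⋆). -/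
lemma beta_nonneg {N : ℕ} (S : Set (EuclideanSpace ℝ (Fin N))) (h : S.Nonempty) (β : ℝ)
    (hlb : ∀ P : EuclideanSpace ℝ (Fin N) → EuclideanSpace ℝ (Fin N),
      (∀ z, P z ∈ S) → ∀ b : ℝ, (∀ z, ∀ x ∈ S, ‖P z - x‖ ≤ b * ‖z - x‖) → β ≤ b)
    (P : EuclideanSpace ℝ (Fin N) → EuclideanSpace ℝ (Fin N))
    (hP : ∀ z, P z ∈ S) (hL : ∀ z, ∀ x ∈ S, ‖P z - x‖ ≤ β * ‖z - x‖) : 0 ≤ β := by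
  by_contra hneg
  push_neg at hneg
  obtain ⟨x, hx⟩ := h
  have hall : ∀ z : EuclideanSpace ℝ (Fin N), z = x := by
    intro z
    have h1 := hL z x hx
    have h2 : (0:ℝ) ≤ ‖P z - x‖ := norm_nonneg _
    have h3 : (0:ℝ) ≤ ‖z - x‖ := norm_nonneg _
    have : ‖z - x‖ = 0 := by nlinarith
    simpa [sub_eq_zero] using this
  have := hlb P hP (β - 1) (by
    intro z y hy
    have hz := hall z
    have hPz := hall (P z)
    have hyx := hall y
    rw [hz, hyx, hall (P x)]; simp)
  linarith


/-- Optimality of the component-wise projection onto a product model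
`Σ = Σ₁ × Σ₂` (with the ℓ²-product norm): if `P₁`, `P₂` achieve the optimal
restricted Lipschitz constants `β₁⋆`, `β₂⋆` for `Σ₁`, `Σ₂`, then the
component-wise map `P_Σ` is a generalized projection onto `Σ` admitting the
restricted Lipschitz constant `max β₁⋆ β₂⋆`, and no generalized projection `Q`
onto `Σ` admits a restricted Lipschitz constant strictly smaller than
`max β₁⋆ β₂⋆`. -/
theorem product_projection_optimal
    {N₁ N₂ : ℕ}
    (S₁ : Set (EuclideanSpace ℝ (Fin N₁))) (S₂ : Set (EuclideanSpace ℝ (Fin N₂)))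
    (h₁ : S₁.Nonempty) (h₂ : S₂.Nonempty)
    (β₁s β₂s : ℝ)
    -- β₁⋆ is a lower bound of the admissible restricted Lipschitz constants
    -- over all generalized projections onto Σ₁ (it is their infimum, being
    -- achieved by P₁ below), and similarly for β₂⋆.
    (hβ₁lb : ∀ P : EuclideanSpace ℝ (Fin N₁) → EuclideanSpace ℝ (Fin N₁),
      (∀ z, P z ∈ S₁) → ∀ β : ℝ, (∀ z, ∀ x ∈ S₁, ‖P z - x‖ ≤ β * ‖z - x‖) → β₁s ≤ β)
    (hβ₂lb : ∀ P : EuclideanSpace ℝ (Fin N₂) → EuclideanSpace ℝ (Fin N₂),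
      (∀ z, P z ∈ S₂) → ∀ β : ℝ, (∀ z, ∀ x ∈ S₂, ‖P z - x‖ ≤ β * ‖z - x‖) → β₂s ≤ β)
    (P₁ : EuclideanSpace ℝ (Fin N₁) → EuclideanSpace ℝ (Fin N₁))
    (P₂ : EuclideanSpace ℝ (Fin N₂) → EuclideanSpace ℝ (Fin N₂))
    (hP₁ : ∀ z, P₁ z ∈ S₁) (hP₂ : ∀ z, P₂ z ∈ S₂)
    (hL₁ : ∀ z, ∀ x ∈ S₁, ‖P₁ z - x‖ ≤ β₁s * ‖z - x‖)
    (hL₂ : ∀ z, ∀ x ∈ S₂, ‖P₂ z - x‖ ≤ β₂s * ‖z - x‖)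
    (PS : WithLp 2 (EuclideanSpace ℝ (Fin N₁) × EuclideanSpace ℝ (Fin N₂)) →
          WithLp 2 (EuclideanSpace ℝ (Fin N₁) × EuclideanSpace ℝ (Fin N₂)))
    (hPS : ∀ z, PS z =
      (WithLp.equiv 2 (EuclideanSpace ℝ (Fin N₁) × EuclideanSpace ℝ (Fin N₂))).symm
        (P₁ ((WithLp.equiv 2 (EuclideanSpace ℝ (Fin N₁) × EuclideanSpace ℝ (Fin N₂))) z).1,
         P₂ ((WithLp.equiv 2 (EuclideanSpace ℝ (Fin N₁) × EuclideanSpace ℝ (Fin N₂))) z).2))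
    (S : Set (WithLp 2 (EuclideanSpace ℝ (Fin N₁) × EuclideanSpace ℝ (Fin N₂))))
    (hS : S = {z | ((WithLp.equiv 2 (EuclideanSpace ℝ (Fin N₁) × EuclideanSpace ℝ (Fin N₂))) z).1 ∈ S₁
      ∧ ((WithLp.equiv 2 (EuclideanSpace ℝ (Fin N₁) × EuclideanSpace ℝ (Fin N₂))) z).2 ∈ S₂}) :
    -- P_Σ is a generalized projection onto Σ,
    (∀ z, PS z ∈ S) ∧
    -- its restricted Lipschitz constant is (at most) max β₁⋆ β₂⋆,
    (∀ z, ∀ x ∈ S, ‖PS z - x‖ ≤ max β₁s β₂s * ‖z - x‖) ∧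
    -- and no generalized projection onto Σ admits a strictly smaller constant,
    -- so the restricted Lipschitz constant of P_Σ equals max β₁⋆ β₂⋆ and P_Σ
    -- is optimal.
    (∀ Q : WithLp 2 (EuclideanSpace ℝ (Fin N₁) × EuclideanSpace ℝ (Fin N₂)) →
           WithLp 2 (EuclideanSpace ℝ (Fin N₁) × EuclideanSpace ℝ (Fin N₂)),
      (∀ z, Q z ∈ S) → ∀ β : ℝ,
        (∀ z, ∀ x ∈ S, ‖Q z - x‖ ≤ β * ‖z - x‖) → max β₁s β₂s ≤ β) := by

  subst hS
  have hb1 : 0 ≤ β₁s := beta_nonneg S₁ h₁ β₁s hβ₁lb P₁ hP₁ hL₁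
  have hb2 : 0 ≤ β₂s := beta_nonneg S₂ h₂ β₂s hβ₂lb P₂ hP₂ hL₂
  have hm : 0 ≤ max β₁s β₂s := le_trans hb1 (le_max_left _ _)
  refine ⟨?_, ?_, ?_⟩
  · intro z
    simp only [hPS]
    exact ⟨hP₁ _, hP₂ _⟩
  · intro z x hx
    obtain ⟨hx1, hx2⟩ := hx
    have e1 : (PS z - x).fst = P₁ z.fst - x.fst := by rw [hPS]; rfl
    have e2 : (PS z - x).snd = P₂ z.snd - x.snd := by rw [hPS]; rfl
    have hsq := WithLp.prod_norm_sq_eq_of_L2 (PS z - x)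
    have hsq' := WithLp.prod_norm_sq_eq_of_L2 (z - x)
    rw [e1, e2] at hsq
    have c1 : (z - x).fst = z.fst - x.fst := rfl
    have c2 : (z - x).snd = z.snd - x.snd := rfl
    rw [c1, c2] at hsq'
    have l1 : ‖P₁ z.fst - x.fst‖ ≤ max β₁s β₂s * ‖z.fst - x.fst‖ :=
      (hL₁ z.fst x.fst hx1).trans (by
        have := norm_nonneg (z.fst - x.fst)
        nlinarith [le_max_left β₁s β₂s])
    have l2 : ‖P₂ z.snd - x.snd‖ ≤ max β₁s β₂s * ‖z.snd - x.snd‖ :=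
      (hL₂ z.snd x.snd hx2).trans (by
        have := norm_nonneg (z.snd - x.snd)
        nlinarith [le_max_right β₁s β₂s])
    have key : ‖PS z - x‖ ^ 2 ≤ (max β₁s β₂s * ‖z - x‖) ^ 2 := by
      rw [hsq]
      have n1 := norm_nonneg (P₁ z.fst - x.fst)
      have n2 := norm_nonneg (P₂ z.snd - x.snd)
      have m1 := norm_nonneg (z.fst - x.fst)
      have m2 := norm_nonneg (z.snd - x.snd)
      have sq1 := pow_le_pow_left₀ n1 l1 2
      have sq2 := pow_le_pow_left₀ n2 l2 2
      have hr : ((β₁s ⊔ β₂s) * ‖z - x‖) ^ 2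
          = ((β₁s ⊔ β₂s) * ‖z.fst - x.fst‖) ^ 2 + ((β₁s ⊔ β₂s) * ‖z.snd - x.snd‖) ^ 2 := by
        rw [mul_pow, hsq']; ring
      rw [hr]
      linarith
    have hrhs : 0 ≤ max β₁s β₂s * ‖z - x‖ := mul_nonneg hm (norm_nonneg _)
    nlinarith [norm_nonneg (PS z - x), key]
  · intro Q hQ β hβ
    obtain ⟨a, ha⟩ := h₁
    obtain ⟨b, hb⟩ := h₂
    have comp1 : ∀ (w : WithLp 2 (EuclideanSpace ℝ (Fin N₁) × EuclideanSpace ℝ (Fin N₂))),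
        ‖w.fst‖ ≤ ‖w‖ ∧ ‖w.snd‖ ≤ ‖w‖ := by
      intro w
      have h := WithLp.prod_norm_sq_eq_of_L2 w
      have n1 := norm_nonneg w.fst
      have n2 := norm_nonneg w.snd
      have n := norm_nonneg w
      constructor <;> nlinarith
    have h1 : β₁s ≤ β := by
      refine hβ₁lb (fun z₁ => (Q ((WithLp.equiv 2 _).symm (z₁, b))).fst)
        (fun z₁ => (hQ _).1) β ?_
      intro z₁ x₁ hx₁
      set z : WithLp 2 (EuclideanSpace ℝ (Fin N₁) × EuclideanSpace ℝ (Fin N₂)) :=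
        (WithLp.equiv 2 _).symm (z₁, b)
      set x : WithLp 2 (EuclideanSpace ℝ (Fin N₁) × EuclideanSpace ℝ (Fin N₂)) :=
        (WithLp.equiv 2 _).symm (x₁, b)
      have hxS : x ∈ {z | ((WithLp.equiv 2 (EuclideanSpace ℝ (Fin N₁) × EuclideanSpace ℝ (Fin N₂))) z).1 ∈ S₁ ∧ ((WithLp.equiv 2 (EuclideanSpace ℝ (Fin N₁) × EuclideanSpace ℝ (Fin N₂))) z).2 ∈ S₂} := ⟨hx₁, hb⟩
      have step1 : ‖(Q z).fst - x₁‖ ≤ ‖Q z - x‖ := by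
        have := (comp1 (Q z - x)).1
        have e : (Q z - x).fst = (Q z).fst - x₁ := rfl
        rwa [e] at this
      have step2 : ‖Q z - x‖ ≤ β * ‖z - x‖ := hβ z x hxS
      have step3 : ‖z - x‖ = ‖z₁ - x₁‖ := by
        have h := WithLp.prod_norm_sq_eq_of_L2 (z - x)
        have e1 : (z - x).fst = z₁ - x₁ := rfl
        have e2 : (z - x).snd = b - b := rfl
        rw [e1, e2] at h
        simp at h
        have n := norm_nonneg (z - x)
        have m := norm_nonneg (z₁ - x₁)
        nlinarith
      calc ‖(Q z).fst - x₁‖ ≤ ‖Q z - x‖ := step1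
        _ ≤ β * ‖z - x‖ := step2
        _ = β * ‖z₁ - x₁‖ := by rw [step3]
    have h2 : β₂s ≤ β := by
      refine hβ₂lb (fun z₂ => (Q ((WithLp.equiv 2 _).symm (a, z₂))).snd)
        (fun z₂ => (hQ _).2) β ?_
      intro z₂ x₂ hx₂
      set z : WithLp 2 (EuclideanSpace ℝ (Fin N₁) × EuclideanSpace ℝ (Fin N₂)) :=
        (WithLp.equiv 2 _).symm (a, z₂)
      set x : WithLp 2 (EuclideanSpace ℝ (Fin N₁) × EuclideanSpace ℝ (Fin N₂)) :=
        (WithLp.equiv 2 _).symm (a, x₂)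
      have hxS : x ∈ {z | ((WithLp.equiv 2 (EuclideanSpace ℝ (Fin N₁) × EuclideanSpace ℝ (Fin N₂))) z).1 ∈ S₁ ∧ ((WithLp.equiv 2 (EuclideanSpace ℝ (Fin N₁) × EuclideanSpace ℝ (Fin N₂))) z).2 ∈ S₂} := ⟨ha, hx₂⟩
      have step1 : ‖(Q z).snd - x₂‖ ≤ ‖Q z - x‖ := by
        have := (comp1 (Q z - x)).2
        have e : (Q z - x).snd = (Q z).snd - x₂ := rfl
        rwa [e] at this
      have step2 : ‖Q z - x‖ ≤ β * ‖z - x‖ := hβ z x hxS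
      have step3 : ‖z - x‖ = ‖z₂ - x₂‖ := by
        have h := WithLp.prod_norm_sq_eq_of_L2 (z - x)
        have e1 : (z - x).fst = a - a := rfl
        have e2 : (z - x).snd = z₂ - x₂ := rfl
        rw [e1, e2] at h
        simp at h
        have n := norm_nonneg (z - x)
        have m := norm_nonneg (z₂ - x₂)
        nlinarith
      calc ‖(Q z).snd - x₂‖ ≤ ‖Q z - x‖ := step1
        _ ≤ β * ‖z - x‖ := step2
        _ = β * ‖z₂ - x₂‖ := by rw [step3]
    exact max_le h1 h2
end

section
/- Let q ≥ 1, let Σ₁ ⊆ E₁, …, Σ_q ⊆ E_q be nonempty subsets of Euclidean spaces, equip the product E = E₁ × ⋯ × E_q with the ℓ²-product norm ‖(x₁,…,x_q)‖₂ = √(Σᵢ ‖xᵢ‖₂²), and set Σ = Σ₁ × ⋯ × Σ_q. For each i let β_i⋆ be the infimum of the restricted Lipschitz constants over all generalized projections onto Σᵢ, and suppose P_i is a generalized projection onto Σᵢ achieving β_i⋆. Then the component-wise map P_Σ(z) = (P₁(z₁), …, P_q(z_q)) is an optimal generalized projection onto Σ: its restricted Lipschitz constant equals max_i β_i⋆,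 and no generalized projection onto Σ has a strictly smaller restricted Lipschitz constant. -/
/-- Optimality of the component-wise projection onto a `q`-fold product model
`Σ = Σ₁ × ⋯ × Σ_q` (with the ℓ²-product norm): if each `P i` achieves the
optimal restricted Lipschitz constant `βs i` for `S i`, then the component-wise
map `P_Σ` is a generalized projection onto `Σ` admitting the restricted
Lipschitz constant `⨆ i, βs i = max_i βs i`, and no generalized projection
onto `Σ` admits a strictly smaller constant. -/
theorem multi_product_projection_optimal
    (q : ℕ) (hq : 1 ≤ q) (Nd : Fin q → ℕ)
    (S : ∀ i : Fin q, Set (EuclideanSpace ℝ (Fin (Nd i))))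
    (hS : ∀ i, (S i).Nonempty)
    (βs : Fin q → ℝ)
    -- each βs i is a lower bound of the admissible restricted Lipschitz
    -- constants over all generalized projections onto S i (it is their
    -- infimum, being achieved by P i below).
    (hβlb : ∀ i, ∀ P : EuclideanSpace ℝ (Fin (Nd i)) → EuclideanSpace ℝ (Fin (Nd i)),
      (∀ z, P z ∈ S i) → ∀ β : ℝ,
        (∀ z, ∀ x ∈ S i, ‖P z - x‖ ≤ β * ‖z - x‖) → βs i ≤ β)
    (P : ∀ i : Fin q, EuclideanSpace ℝ (Fin (Nd i)) → EuclideanSpace ℝ (Fin (Nd i)))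
    (hPmem : ∀ i, ∀ z, P i z ∈ S i)
    (hPlip : ∀ i, ∀ z, ∀ x ∈ S i, ‖P i z - x‖ ≤ βs i * ‖z - x‖)
    (PS : PiLp 2 (fun i : Fin q => EuclideanSpace ℝ (Fin (Nd i))) →
          PiLp 2 (fun i : Fin q => EuclideanSpace ℝ (Fin (Nd i))))
    (hPS : ∀ z, ∀ i, PS z i = P i (z i))
    (SS : Set (PiLp 2 (fun i : Fin q => EuclideanSpace ℝ (Fin (Nd i)))))
    (hSS : SS = {z | ∀ i, z i ∈ S i}) :
    -- P_Σ is a generalized projection onto Σ,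
    (∀ z, PS z ∈ SS) ∧
    -- its restricted Lipschitz constant is (at most) max_i βs i,
    (∀ z, ∀ x ∈ SS, ‖PS z - x‖ ≤ (⨆ i, βs i) * ‖z - x‖) ∧
    -- and no generalized projection onto Σ admits a strictly smaller constant,
    -- so the restricted Lipschitz constant of P_Σ equals max_i βs i and P_Σ
    -- is optimal.
    (∀ Q : PiLp 2 (fun i : Fin q => EuclideanSpace ℝ (Fin (Nd i))) →
           PiLp 2 (fun i : Fin q => EuclideanSpace ℝ (Fin (Nd i))),
      (∀ z, Q z ∈ SS) → ∀ β : ℝ,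
        (∀ z, ∀ x ∈ SS, ‖Q z - x‖ ≤ β * ‖z - x‖) → (⨆ i, βs i) ≤ β) := by
  have hne : Nonempty (Fin q) := ⟨⟨0, hq⟩⟩
  set B := ⨆ i, βs i with hB
  have hβB : ∀ i, βs i ≤ B := fun i =>
    le_ciSup (Set.Finite.bddAbove (Set.finite_range βs)) i
  -- component norm ≤ total norm
  have hcomp : ∀ (v : PiLp 2 (fun j : Fin q => EuclideanSpace ℝ (Fin (Nd j)))) (i : Fin q),
      ‖v i‖ ≤ ‖v‖ := by
    intro v i
    conv_rhs => rw [PiLp.norm_eq_of_L2]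
    calc ‖v i‖ = Real.sqrt (‖v i‖ ^ 2) := (Real.sqrt_sq (norm_nonneg _)).symm
      _ ≤ _ := Real.sqrt_le_sqrt
          (Finset.single_le_sum (fun j _ => sq_nonneg ‖v j‖) (Finset.mem_univ i))
  -- fixed points
  have hPfix : ∀ i, ∀ x ∈ S i, P i x = x := by
    intro i x hx
    have h := hPlip i x x hx
    rw [sub_self, norm_zero, mul_zero] at h
    have := norm_le_zero_iff.mp h
    exact sub_eq_zero.mp this
  -- membership
  have hmem : ∀ z, PS z ∈ SS := by
    intro z
    rw [hSS]
    intro i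
    rw [hPS]
    exact hPmem i (z i)
  refine ⟨hmem, ?_, ?_⟩
  · intro z x hx
    have hx' : ∀ i, x i ∈ S i := by rw [hSS] at hx; exact hx
    set B' := max B 0 with hB'
    have hlip' : ∀ i, ‖P i (z i) - x i‖ ≤ B' * ‖z i - x i‖ := by
      intro i
      refine (hPlip i (z i) (x i) (hx' i)).trans
        (mul_le_mul_of_nonneg_right ?_ (norm_nonneg _))
      exact le_max_of_le_left (hβB i)
    have hmain : ‖PS z - x‖ ≤ B' * ‖z - x‖ := by
      have hsq : ‖PS z - x‖ ^ 2 ≤ (B' * ‖z - x‖) ^ 2 := by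
        rw [PiLp.norm_eq_of_L2, Real.sq_sqrt (Finset.sum_nonneg fun j _ => sq_nonneg _)]
        have hrhs : (B' * ‖z - x‖) ^ 2 = B' ^ 2 * ‖z - x‖ ^ 2 := by ring
        rw [hrhs, PiLp.norm_eq_of_L2,
          Real.sq_sqrt (Finset.sum_nonneg fun j _ => sq_nonneg _), Finset.mul_sum]
        refine Finset.sum_le_sum fun i _ => ?_
        have h1 : ‖(PS z - x) i‖ = ‖P i (z i) - x i‖ := by
          rw [PiLp.sub_apply, hPS]
        have h2 : ‖(z - x) i‖ = ‖z i - x i‖ := by rw [PiLp.sub_apply]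
        rw [h1, h2]
        have := hlip' i
        have h3 : ‖P i (z i) - x i‖ ^ 2 ≤ (B' * ‖z i - x i‖) ^ 2 :=
          pow_le_pow_left₀ (norm_nonneg _) this 2
        calc ‖P i (z i) - x i‖ ^ 2 ≤ (B' * ‖z i - x i‖) ^ 2 := h3
          _ = B' ^ 2 * ‖z i - x i‖ ^ 2 := by ring
      have h4 := Real.sqrt_le_sqrt hsq
      rwa [Real.sqrt_sq (norm_nonneg _),
        Real.sqrt_sq (mul_nonneg (le_max_right _ _) (norm_nonneg _))] at h4
    rcases le_or_gt 0 B with hB0 | hB0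
    · rwa [hB', max_eq_left hB0] at hmain
    · -- all component spaces are trivial
      have hzx : z = x := by
        refine PiLp.ext fun i => ?_
        have hβi : βs i < 0 := lt_of_le_of_lt (hβB i) hB0
        have h := hPlip i (z i) (x i) (hx' i)
        have h0 : (0:ℝ) ≤ βs i * ‖z i - x i‖ := le_trans (norm_nonneg _) h
        have h5 : ‖z i - x i‖ ≤ 0 := by nlinarith [norm_nonneg (z i - x i)]
        have := le_antisymm h5 (norm_nonneg _)
        exact sub_eq_zero.mp (norm_eq_zero.mp this)
      have hPSx : PS z = x := by
        refine PiLp.ext fun i => ?_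
        rw [hzx, hPS]
        exact hPfix i (x i) (hx' i)
      rw [hPSx, hzx, sub_self, norm_zero, mul_zero]
  · intro Q hQ β hβ
    refine ciSup_le fun i => ?_
    choose b hb using hS
    classical
    set emb : EuclideanSpace ℝ (Fin (Nd i)) →
        PiLp 2 (fun j : Fin q => EuclideanSpace ℝ (Fin (Nd j))) :=
      fun w => WithLp.toLp 2 (Function.update b i w) with hemb
    have hembapp : ∀ w, ∀ j, emb w j = Function.update b i w j := fun _ _ => rfl
    refine hβlb i (fun w => Q (emb w) i) ?_ β ?_
    · intro w
      have h := hQ (emb w)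
      rw [hSS] at h
      exact h i
    · intro w x hx
      have hxi : (emb x) i = x := Function.update_self i x b
      have hnorm : ‖emb w - emb x‖ = ‖w - x‖ := by
        rw [PiLp.norm_eq_of_L2]
        have hterm : ∀ j ∈ Finset.univ, ‖(emb w - emb x) j‖ ^ 2
            = if j = i then ‖w - x‖ ^ 2 else 0 := by
          intro j _
          rcases eq_or_ne j i with rfl | hji
          · simp [hemb, PiLp.sub_apply]
          · simp [hemb, PiLp.sub_apply, Function.update_of_ne hji, hji]
        rw [Finset.sum_congr rfl hterm, Finset.sum_ite_eq' Finset.univ i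
          (fun _ => ‖w - x‖ ^ 2)]
        simp [Real.sqrt_sq (norm_nonneg (w - x))]
      calc ‖Q (emb w) i - x‖ = ‖(Q (emb w) - emb x) i‖ := by
            rw [PiLp.sub_apply, hxi]
        _ ≤ ‖Q (emb w) - emb x‖ := hcomp _ i
        _ ≤ β * ‖emb w - emb x‖ := by
            refine hβ (emb w) (emb x) ?_
            rw [hSS]
            intro j
            rcases eq_or_ne j i with rfl | hji
            · rw [hembapp, Function.update_self]; exact hx
            · rw [hembapp, Function.update_of_ne hji]; exact hb j
        _ = β * ‖w - x‖ := by rw [hnorm]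
end
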